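/- Let T and Y be subspaces of ℝⁿ with Y ⊄ T and dim Y = r. Then there exists a subspace H of ℝⁿ with dim H = n − r such that H + Y = ℝⁿ and H + T ≠ ℝⁿ. -/
import Mathlib


/-- Trotman's linear-algebra lemma: if `Y ⊄ T` and `dim Y = r`, there is a
subspace `H` of dimension `n - r` with `H + Y = ℝⁿ` and `H + T ≠ ℝⁿ`. -/
theorem stmt_4 {n r : ℕ} (T Y : Submodule ℝ (EuclideanSpace ℝ (Fin n)))
    (hYT : ¬ Y ≤ T) (hr : Module.finrank ℝ Y = r) :
    ∃ H : Submodule ℝ (EuclideanSpace ℝ (Fin n)),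
      Module.finrank ℝ H = n - r ∧ H ⊔ Y = ⊤ ∧ H ⊔ T ≠ ⊤ := by
  classical
  obtain ⟨y, hyY, hyT⟩ := SetLike.not_le_iff_exists.mp hYT
  -- find a functional vanishing on T but not on y
  have hq : T.mkQ y ≠ 0 := by
    simpa [Submodule.Quotient.mk_eq_zero] using hyT
  obtain ⟨φ, hφ⟩ : ∃ φ : Module.Dual ℝ (EuclideanSpace ℝ (Fin n) ⧸ T), φ (T.mkQ y) ≠ 0 := by
    by_contra h
    push_neg at h
    exact hq ((Module.forall_dual_apply_eq_zero_iff ℝ _).mp h)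
  set f : EuclideanSpace ℝ (Fin n) →ₗ[ℝ] ℝ := φ.comp T.mkQ with hf
  have hfy : f y ≠ 0 := hφ
  set W : Submodule ℝ (EuclideanSpace ℝ (Fin n)) := LinearMap.ker f with hW
  have hTW : T ≤ W := by
    intro x hx
    show f x = 0
    simp [hf, (Submodule.Quotient.mk_eq_zero T).mpr hx, Submodule.mkQ_apply]
  have hyW : y ∉ W := by
    show ¬ f y = 0
    exact hfy
  -- range of f is ⊤
  have hrange : LinearMap.range f = ⊤ := by
    rw [LinearMap.range_eq_top]
    intro c
    exact ⟨(c * (f y)⁻¹) • y, by simp [mul_assoc, inv_mul_cancel₀ hfy]⟩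
  have hfE : Module.finrank ℝ (EuclideanSpace ℝ (Fin n)) = n := finrank_euclideanSpace_fin
  have hWrank : Module.finrank ℝ W + 1 = n := by
    have h := LinearMap.finrank_range_add_finrank_ker f
    rw [hrange, ← hW, hfE, finrank_top, Module.finrank_self] at h
    omega
  -- Y ⊔ W = ⊤
  have hYW_sup : Y ⊔ W = ⊤ := by
    by_contra h
    have hlt : W < Y ⊔ W := lt_of_le_of_ne le_sup_right (by
      intro hEq
      exact hyW (hEq ▸ Submodule.mem_sup_left hyY))
    have h1 : Module.finrank ℝ (Y ⊔ W : Submodule ℝ (EuclideanSpace ℝ (Fin n))) ≤ n := by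
      simpa only [hfE] using Submodule.finrank_le (Y ⊔ W)
    have h2 := Submodule.finrank_lt_finrank_of_lt hlt
    have h3 : Module.finrank ℝ (Y ⊔ W : Submodule ℝ (EuclideanSpace ℝ (Fin n))) = n := by omega
    exact h (Submodule.eq_top_of_finrank_eq (by rw [h3, hfE]))
  have hy0 : y ≠ 0 := fun h => hyT (h ▸ T.zero_mem)
  have hr1 : 1 ≤ r := by
    rw [← hr]
    exact Submodule.one_le_finrank_iff.mpr (by
      intro h
      exact hy0 (by simpa [h] using hyY))
  -- Y ⊓ W has rank r - 1
  have hinf : Module.finrank ℝ (Y ⊓ W : Submodule ℝ (EuclideanSpace ℝ (Fin n))) + 1 = r := by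
    have h := Submodule.finrank_sup_add_finrank_inf_eq Y W
    rw [hYW_sup, finrank_top, hfE, hr] at h
    omega
  -- complement of Y ⊓ W inside W
  obtain ⟨p, hp⟩ := Submodule.exists_isCompl ((Y ⊓ W).comap W.subtype)
  set H : Submodule ℝ (EuclideanSpace ℝ (Fin n)) := p.map W.subtype with hHdef
  have hHW : H ≤ W := by
    rw [hHdef]
    rintro x ⟨⟨x, hxW⟩, -, rfl⟩
    exact hxW
  have hmapcomap : ((Y ⊓ W).comap W.subtype).map W.subtype = Y ⊓ W := by
    rw [Submodule.map_comap_subtype]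
    exact inf_eq_right.mpr inf_le_right
  have hsupW : (Y ⊓ W) ⊔ H = W := by
    have h := congrArg (Submodule.map W.subtype) hp.codisjoint.eq_top
    rwa [Submodule.map_sup, hmapcomap, Submodule.map_top, Submodule.range_subtype] at h
  have hHrank : Module.finrank ℝ H = n - r := by
    have hadd := Submodule.finrank_add_eq_of_isCompl hp
    have h1 := Submodule.finrank_map_subtype_eq W ((Y ⊓ W).comap W.subtype)
    rw [hmapcomap] at h1
    have h2 : Module.finrank ℝ H = Module.finrank ℝ p := Submodule.finrank_map_subtype_eq W p
    omega
  refine ⟨H, hHrank, ?_, ?_⟩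
  · -- H ⊔ Y = ⊤
    have hWle : W ≤ H ⊔ Y := by
      rw [← hsupW]
      exact sup_le (le_trans inf_le_left le_sup_right) le_sup_left
    by_contra h
    have hlt : W < H ⊔ Y := lt_of_le_of_ne hWle (by
      intro hEq
      exact hyW (hEq ▸ Submodule.mem_sup_right hyY))
    have h1 : Module.finrank ℝ (H ⊔ Y : Submodule ℝ (EuclideanSpace ℝ (Fin n))) ≤ n := by
      simpa only [hfE] using Submodule.finrank_le (H ⊔ Y)
    have h2 := Submodule.finrank_lt_finrank_of_lt hlt
    have h3 : Module.finrank ℝ (H ⊔ Y : Submodule ℝ (EuclideanSpace ℝ (Fin n))) = n := by omega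
    exact h (Submodule.eq_top_of_finrank_eq (by rw [h3, hfE]))
  · -- H ⊔ T ≠ ⊤
    intro h
    have hle : (⊤ : Submodule ℝ (EuclideanSpace ℝ (Fin n))) ≤ W := h ▸ sup_le hHW hTW
    exact hyW (hle Submodule.mem_top)
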